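/- The infimum of the norm over the Nehari manifold is positive: inf{‖ψ‖_H : ψ ∈ H, ψ ≠ 0, I'[ψ]ψ = 0} > 0. -/

import Mathlib

open Real MeasureTheory Set Filter

noncomputable section

/-- `∂_z` of a function of `(z,r)`. -/
def pz2 (f : ℝ × ℝ → ℝ) (x : ℝ × ℝ) : ℝ := fderiv ℝ f x (1, 0)

/-- `∂_r` of a function of `(z,r)`. -/
def pr2 (f : ℝ × ℝ → ℝ) (x : ℝ × ℝ) : ℝ := fderiv ℝ f x (0, 1)

/-- `|∇ψ|²` for a function of `(z,r)`. -/
def gradsq (f : ℝ × ℝ → ℝ) (x : ℝ × ℝ) : ℝ := pz2 f x ^ 2 + pr2 f x ^ 2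

/-- The half disk `D = {(z,r) : r > 0, z² + r² < R²}`. -/
def halfDisk (R : ℝ) : Set (ℝ × ℝ) := {x | 0 < x.2 ∧ x.1 ^ 2 + x.2 ^ 2 < R ^ 2}

/-- The squared norm of the weighted Sobolev space `H(D;r⁻¹)`:
`‖ψ‖² = 2π² ∫_D |∇ψ|² r⁻¹ dz dr`. -/
def Hnormsq (D : Set (ℝ × ℝ)) (ψ : ℝ × ℝ → ℝ) : ℝ :=
  2 * π ^ 2 * ∫ x in D, gradsq ψ x / x.2

/-- `J[ψ] = (π²λ/q) ∫_D (ψ - r² - γ)₊^{2q} r⁻¹ dz dr`. -/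
def Jfun (D : Set (ℝ × ℝ)) (q lam gam : ℝ) (ψ : ℝ × ℝ → ℝ) : ℝ :=
  (π ^ 2 * lam / q) * ∫ x in D, (max (ψ x - x.2 ^ 2 - gam) 0) ^ (2 * q) / x.2

/-- The functional `I[ψ] = ½‖ψ‖²_H - J[ψ]`. -/
def Ifun (D : Set (ℝ × ℝ)) (q lam gam : ℝ) (ψ : ℝ × ℝ → ℝ) : ℝ :=
  Hnormsq D ψ / 2 - Jfun D q lam gam ψ

/-- `I'[ψ]φ = 2π² ∫_D ∇ψ·∇φ r⁻¹ - 2π²λ ∫_D (ψ - r² - γ)₊^{2q-1} φ r⁻¹`. -/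
def Iprime (D : Set (ℝ × ℝ)) (q lam gam : ℝ) (ψ φ : ℝ × ℝ → ℝ) : ℝ :=
  2 * π ^ 2 * (∫ x in D, (pz2 ψ x * pz2 φ x + pr2 ψ x * pr2 φ x) / x.2)
    - 2 * π ^ 2 * lam * ∫ x in D, (max (ψ x - x.2 ^ 2 - gam) 0) ^ (2 * q - 1) * φ x / x.2

/-- `I'[ψ]ψ = ‖ψ‖²_H - 2π²λ ∫_D (ψ - r² - γ)₊^{2q-1} ψ r⁻¹`. -/
def IprimeSelf (D : Set (ℝ × ℝ)) (q lam gam : ℝ) (ψ : ℝ × ℝ → ℝ) : ℝ :=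
  Hnormsq D ψ - 2 * π ^ 2 * lam *
    ∫ x in D, (max (ψ x - x.2 ^ 2 - gam) 0) ^ (2 * q - 1) * ψ x / x.2

/-- Admissible (test) functions of the weighted Sobolev space `H(D;r⁻¹)`:
smooth, compactly supported in `D`. -/
def Adm (D : Set (ℝ × ℝ)) (ψ : ℝ × ℝ → ℝ) : Prop :=
  ContDiff ℝ (⊤ : ℕ∞) ψ ∧ HasCompactSupport ψ ∧ tsupport ψ ⊆ D

open scoped ENNReal NNReal

lemma hardy_slice (g g' : ℝ → ℝ) (hg : ∀ r, HasDerivAt g (g' r) r)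
    (hg' : Continuous g') (h0 : g 0 = 0) :
    ∫⁻ r in Ioi (0:ℝ), ENNReal.ofReal (g r ^ 2 / r ^ 3)
      ≤ ∫⁻ r in Ioi (0:ℝ), ENNReal.ofReal (g' r ^ 2 / r) := by
  classical
  set h : ℝ → ℝ≥0∞ := fun s => (‖g' s‖₊ : ℝ≥0∞) ^ (2:ℝ) with hh
  have hmeas_h : Measurable h := (hg'.measurable.nnnorm.coe_nnreal_ennreal).pow_const _
  have step1 : ∀ r ∈ Ioi (0:ℝ), ENNReal.ofReal (g r ^ 2 / r ^ 3)
      ≤ (∫⁻ s in Ioc (0:ℝ) r, h s) * ENNReal.ofReal (1 / r ^ 2) := by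
    intro r hr
    rw [mem_Ioi] at hr
    have hftc : ∫ s in (0:ℝ)..r, g' s = g r := by
      rw [intervalIntegral.integral_eq_sub_of_hasDerivAt (fun x _ => hg x)
        (hg'.intervalIntegrable 0 r), h0, sub_zero]
    have hset : ∫ s in Ioc (0:ℝ) r, g' s = g r := by
      rw [← hftc, intervalIntegral.integral_of_le hr.le]
    have h1 : (‖g r‖₊ : ℝ≥0∞) ≤ ∫⁻ s in Ioc (0:ℝ) r, (‖g' s‖₊ : ℝ≥0∞) := by
      rw [← hset]; exact enorm_integral_le_lintegral_enorm _
    have h2 : ∫⁻ s in Ioc (0:ℝ) r, (‖g' s‖₊ : ℝ≥0∞)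
        ≤ (∫⁻ s in Ioc (0:ℝ) r, h s) ^ (1/2 : ℝ) * (ENNReal.ofReal r) ^ (1/2 : ℝ) := by
      have hcs := ENNReal.lintegral_mul_le_Lp_mul_Lq (volume.restrict (Ioc (0:ℝ) r))
        (Real.HolderConjugate.conjExponent (by norm_num : (1:ℝ) < 2))
        (hg'.measurable.nnnorm.coe_nnreal_ennreal).aemeasurable
        (aemeasurable_const : AEMeasurable (fun _ : ℝ => (1:ℝ≥0∞)) _)
      simp only [Pi.mul_apply, mul_one, ENNReal.one_rpow] at hcs
      calc ∫⁻ s in Ioc (0:ℝ) r, (‖g' s‖₊ : ℝ≥0∞)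
          ≤ (∫⁻ s in Ioc (0:ℝ) r, (‖g' s‖₊ : ℝ≥0∞) ^ (2:ℝ)) ^ (1/2 : ℝ)
            * (∫⁻ _ in Ioc (0:ℝ) r, (1:ℝ≥0∞)) ^ (1/2 : ℝ) := by
            convert hcs using 3
            rw [Real.conjExponent]
            norm_num
        _ = (∫⁻ s in Ioc (0:ℝ) r, h s) ^ (1/2 : ℝ) * (ENNReal.ofReal r) ^ (1/2 : ℝ) := by
            rw [lintegral_one, Measure.restrict_apply_univ, Real.volume_Ioc, sub_zero]
    have h3 : (‖g r‖₊ : ℝ≥0∞) ^ (2:ℝ) ≤ (∫⁻ s in Ioc (0:ℝ) r, h s) * ENNReal.ofReal r := by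
      calc (‖g r‖₊ : ℝ≥0∞) ^ (2:ℝ)
          ≤ ((∫⁻ s in Ioc (0:ℝ) r, h s) ^ (1/2:ℝ) * (ENNReal.ofReal r) ^ (1/2:ℝ)) ^ (2:ℝ) :=
            ENNReal.rpow_le_rpow (h1.trans h2) (by norm_num)
        _ = (∫⁻ s in Ioc (0:ℝ) r, h s) * ENNReal.ofReal r := by
            rw [ENNReal.mul_rpow_of_nonneg _ _ (by norm_num : (0:ℝ) ≤ 2),
              ← ENNReal.rpow_mul, ← ENNReal.rpow_mul]
            norm_num
    have hofg : ENNReal.ofReal (g r ^ 2 / r ^ 3)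
        = (‖g r‖₊ : ℝ≥0∞) ^ (2:ℝ) * ENNReal.ofReal (1 / r ^ 3) := by
      rw [div_eq_mul_one_div, ENNReal.ofReal_mul (sq_nonneg _), ← enorm_eq_nnnorm, Real.enorm_eq_ofReal_abs,
        ENNReal.ofReal_rpow_of_nonneg (abs_nonneg _) (by norm_num : (0:ℝ) ≤ 2)]
      congr 2
      rw [show (2:ℝ) = ((2:ℕ):ℝ) by norm_num, Real.rpow_natCast, sq_abs]
    calc ENNReal.ofReal (g r ^ 2 / r ^ 3)
        = (‖g r‖₊ : ℝ≥0∞) ^ (2:ℝ) * ENNReal.ofReal (1 / r ^ 3) := hofg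
      _ ≤ ((∫⁻ s in Ioc (0:ℝ) r, h s) * ENNReal.ofReal r) * ENNReal.ofReal (1 / r ^ 3) :=
          mul_le_mul_left h3 _
      _ = (∫⁻ s in Ioc (0:ℝ) r, h s) * (ENNReal.ofReal r * ENNReal.ofReal (1 / r ^ 3)) :=
          mul_assoc _ _ _
      _ = (∫⁻ s in Ioc (0:ℝ) r, h s) * ENNReal.ofReal (1 / r ^ 2) := by
          rw [← ENNReal.ofReal_mul hr.le]
          congr 1
          field_simp
  have hint : ∀ s : ℝ, 0 < s →
      ∫⁻ r in Ici s, ENNReal.ofReal (1 / r ^ 2) = ENNReal.ofReal (1 / s) := by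
    intro s hs
    rw [(MeasureTheory.Measure.restrict_congr_set (Ioi_ae_eq_Ici (a:=s) (μ:=volume))).symm]
    have hcong : ∀ r ∈ Ioi s, ENNReal.ofReal (1 / r ^ 2) = ENNReal.ofReal (r ^ (-2:ℝ)) := by
      intro r hr
      rw [mem_Ioi] at hr
      have hr0 : (0:ℝ) < r := hs.trans hr
      congr 1
      rw [Real.rpow_neg hr0.le, show ((2:ℝ)) = ((2:ℕ):ℝ) from by norm_num,
        Real.rpow_natCast, one_div]
    rw [setLIntegral_congr_fun measurableSet_Ioi hcong,
      ← MeasureTheory.ofReal_integral_eq_lintegral_ofReal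
        (integrableOn_Ioi_rpow_of_lt (by norm_num : (-2:ℝ) < -1) hs)
        ((ae_restrict_iff' measurableSet_Ioi).2 (Filter.Eventually.of_forall
          (fun r hr => Real.rpow_nonneg (hs.trans hr).le _))),
      integral_Ioi_rpow_of_lt (by norm_num : (-2:ℝ) < -1) hs]
    norm_num
    rw [Real.rpow_neg_one]
  set S : Set (ℝ × ℝ) := {p : ℝ × ℝ | 0 < p.2 ∧ p.2 ≤ p.1} with hS
  have hSmeas : MeasurableSet S :=
    (measurableSet_lt measurable_const measurable_snd).inter
      (measurableSet_le measurable_snd measurable_fst)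
  have huncurry : (Function.uncurry fun r s =>
      (Ioc (0:ℝ) r).indicator h s * ENNReal.ofReal (1 / r ^ 2))
      = fun p : ℝ × ℝ => S.indicator (fun x => h x.2) p * ENNReal.ofReal (1 / p.1 ^ 2) := by
    ext p
    by_cases hp : p.2 ∈ Ioc 0 p.1
    · rw [Function.uncurry]
      simp only [Set.indicator_of_mem hp]
      rw [Set.indicator_of_mem (by exact ⟨hp.1, hp.2⟩)]
    · rw [Function.uncurry]
      simp only [Set.indicator_of_notMem hp]
      rw [Set.indicator_of_notMem (by exact fun hc => hp ⟨hc.1, hc.2⟩)]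
  have hmeasK : AEMeasurable (Function.uncurry fun r s =>
      (Ioc (0:ℝ) r).indicator h s * ENNReal.ofReal (1 / r ^ 2))
      ((volume.restrict (Ioi (0:ℝ))).prod volume) := by
    rw [huncurry]
    exact (((hmeas_h.comp measurable_snd).indicator hSmeas).mul
      ((measurable_const.div ((measurable_fst.pow_const 2))).ennreal_ofReal)).aemeasurable
  have hmono : Measurable fun r : ℝ => (∫⁻ s in Ioc (0:ℝ) r, h s) * ENNReal.ofReal (1 / r ^ 2) := by
    refine Measurable.mul ?_ ((measurable_const.div ((measurable_id.pow_const 2))).ennreal_ofReal)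
    refine Monotone.measurable (fun r1 r2 h12 => ?_)
    exact lintegral_mono_set (Ioc_subset_Ioc_right h12)
  calc ∫⁻ r in Ioi (0:ℝ), ENNReal.ofReal (g r ^ 2 / r ^ 3)
      ≤ ∫⁻ r in Ioi (0:ℝ), (∫⁻ s in Ioc (0:ℝ) r, h s) * ENNReal.ofReal (1 / r ^ 2) :=
        setLIntegral_mono hmono step1
    _ = ∫⁻ r in Ioi (0:ℝ), ∫⁻ s, (Ioc (0:ℝ) r).indicator h s * ENNReal.ofReal (1 / r ^ 2) := by
        refine lintegral_congr fun r => ?_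
        rw [lintegral_mul_const _ (hmeas_h.indicator measurableSet_Ioc),
          lintegral_indicator measurableSet_Ioc]
    _ = ∫⁻ s, ∫⁻ r in Ioi (0:ℝ), (Ioc (0:ℝ) r).indicator h s * ENNReal.ofReal (1 / r ^ 2) :=
        lintegral_lintegral_swap hmeasK
    _ = ∫⁻ s, (Ioi (0:ℝ)).indicator (fun s => h s * ENNReal.ofReal (1 / s)) s := by
        refine lintegral_congr fun s => ?_
        by_cases hs : 0 < s
        · have hrw : ∀ r : ℝ, (Ioc (0:ℝ) r).indicator h s * ENNReal.ofReal (1 / r ^ 2)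
              = (Ici s).indicator (fun r => h s * ENNReal.ofReal (1 / r ^ 2)) r := by
            intro r
            by_cases hsr : s ≤ r
            · rw [Set.indicator_of_mem (mem_Ioc.2 ⟨hs, hsr⟩),
                Set.indicator_of_mem (mem_Ici.2 hsr)]
            · rw [Set.indicator_of_notMem (fun hc => hsr (mem_Ioc.1 hc).2),
                Set.indicator_of_notMem (fun hc => hsr (mem_Ici.1 hc)), zero_mul]
          rw [lintegral_congr hrw, lintegral_indicator measurableSet_Ici,
            Measure.restrict_restrict measurableSet_Ici,
            inter_eq_self_of_subset_left (Set.Ici_subset_Ioi.mpr hs),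
            lintegral_const_mul' _ _ (ENNReal.rpow_ne_top_of_nonneg (by norm_num)
              ENNReal.coe_ne_top),
            hint s hs, Set.indicator_of_mem (mem_Ioi.2 hs)]
        · rw [Set.indicator_of_notMem (fun hc => hs (mem_Ioi.1 hc))]
          have hz : ∀ r : ℝ, (Ioc (0:ℝ) r).indicator h s * ENNReal.ofReal (1 / r ^ 2) = 0 := by
            intro r
            rw [Set.indicator_of_notMem (fun hc => hs (mem_Ioc.1 hc).1), zero_mul]
          rw [lintegral_congr hz, lintegral_zero]
    _ = ∫⁻ s in Ioi (0:ℝ), h s * ENNReal.ofReal (1 / s) :=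
        lintegral_indicator measurableSet_Ioi _
    _ = ∫⁻ s in Ioi (0:ℝ), ENNReal.ofReal (g' s ^ 2 / s) := by
        refine setLIntegral_congr_fun measurableSet_Ioi (
          fun s hs => ?_)
        show (‖g' s‖₊ : ℝ≥0∞) ^ (2:ℝ) * ENNReal.ofReal (1 / s) = ENNReal.ofReal (g' s ^ 2 / s)
        rw [← enorm_eq_nnnorm, Real.enorm_eq_ofReal_abs, ENNReal.ofReal_rpow_of_nonneg (abs_nonneg _)
          (by norm_num : (0:ℝ) ≤ 2), show |g' s| ^ (2:ℝ) = g' s ^ 2 from by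
            rw [show (2:ℝ) = ((2:ℕ):ℝ) from by norm_num, Real.rpow_natCast, sq_abs],
          ← ENNReal.ofReal_mul (sq_nonneg _), ← div_eq_mul_one_div]

lemma isOpen_halfDisk (R : ℝ) : IsOpen (halfDisk R) := by
  have h1 : IsOpen {x : ℝ × ℝ | 0 < x.2} := isOpen_lt continuous_const continuous_snd
  have h2 : IsOpen {x : ℝ × ℝ | x.1 ^ 2 + x.2 ^ 2 < R ^ 2} :=
    isOpen_lt (by continuity) continuous_const
  exact h1.inter h2

lemma measurableSet_halfDisk (R : ℝ) : MeasurableSet (halfDisk R) :=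
  (isOpen_halfDisk R).measurableSet

lemma halfDisk_subset_closedBall {R : ℝ} (hR : 0 < R) :
    halfDisk R ⊆ Metric.closedBall (0 : ℝ × ℝ) R := by
  intro x hx
  obtain ⟨h1, h2⟩ := hx
  rw [Metric.mem_closedBall, Prod.dist_eq]
  simp only [Prod.fst_zero, Prod.snd_zero, dist_zero_right, sup_le_iff]
  constructor
  · rw [Real.norm_eq_abs, abs_le]
    constructor <;> nlinarith [sq_nonneg x.2]
  · rw [Real.norm_eq_abs, abs_le]
    constructor <;> nlinarith [sq_nonneg x.1]

lemma volume_halfDisk_lt_top {R : ℝ} (hR : 0 < R) : volume (halfDisk R) < ⊤ :=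
  lt_of_le_of_lt (measure_mono (halfDisk_subset_closedBall hR))
    (ProperSpace.isCompact_closedBall _ _).measure_lt_top

lemma cont_pz2 {ψ : ℝ × ℝ → ℝ} (hsm : ContDiff ℝ (⊤:ℕ∞) ψ) : Continuous (pz2 ψ) :=
  Continuous.clm_apply (hsm.continuous_fderiv (by simp)) continuous_const

lemma cont_pr2 {ψ : ℝ × ℝ → ℝ} (hsm : ContDiff ℝ (⊤:ℕ∞) ψ) : Continuous (pr2 ψ) :=
  Continuous.clm_apply (hsm.continuous_fderiv (by simp)) continuous_const

lemma cont_gradsq {ψ : ℝ × ℝ → ℝ} (hsm : ContDiff ℝ (⊤:ℕ∞) ψ) : Continuous (gradsq ψ) :=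
  ((cont_pz2 hsm).pow 2).add ((cont_pr2 hsm).pow 2)

lemma hasDerivAt_slice {ψ : ℝ × ℝ → ℝ} (hsm : ContDiff ℝ (⊤:ℕ∞) ψ) (z r : ℝ) :
    HasDerivAt (fun t => ψ (z, t)) (pr2 ψ (z, r)) r := by
  have hF := (hsm.differentiable (by simp) (z, r)).hasFDerivAt
  have hc : HasDerivAt (fun t : ℝ => ((z, t) : ℝ × ℝ)) ((0:ℝ), (1:ℝ)) r :=
    (hasDerivAt_const r z).prodMk (hasDerivAt_id r)
  exact hF.comp_hasDerivAt r hc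

lemma hardy2d {R : ℝ} (ψ : ℝ × ℝ → ℝ) (hsm : ContDiff ℝ (⊤:ℕ∞) ψ)
    (hsupp : tsupport ψ ⊆ halfDisk R) :
    ∫⁻ x in halfDisk R, ENNReal.ofReal (ψ x ^ 2 / x.2 ^ 3)
      ≤ ∫⁻ x in halfDisk R, ENNReal.ofReal (pr2 ψ x ^ 2 / x.2) := by
  classical
  set Q : ℝ × ℝ → ℝ≥0∞ := fun x => if 0 < x.2 then ENNReal.ofReal (ψ x ^ 2 / x.2 ^ 3) else 0
    with hQ
  set P : ℝ × ℝ → ℝ≥0∞ := fun x => if 0 < x.2 then ENNReal.ofReal (pr2 ψ x ^ 2 / x.2) else 0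
    with hP
  have hs2 : MeasurableSet {x : ℝ × ℝ | 0 < x.2} :=
    measurableSet_lt measurable_const measurable_snd
  have hQm : Measurable Q := Measurable.ite hs2
    (((hsm.continuous.pow 2).measurable).div ((continuous_snd.pow 3).measurable)).ennreal_ofReal
    measurable_const
  have hPm : Measurable P := Measurable.ite hs2
    ((((cont_pr2 hsm).pow 2).measurable).div (continuous_snd.measurable)).ennreal_ofReal
    measurable_const
  have key : ∫⁻ x, Q x ≤ ∫⁻ x, P x := by
    rw [Measure.volume_eq_prod, lintegral_prod _ hQm.aemeasurable,
      lintegral_prod _ hPm.aemeasurable]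
    refine lintegral_mono fun z => ?_
    have hQz : ∀ t : ℝ, Q (z, t) = (Ioi (0:ℝ)).indicator
        (fun t => ENNReal.ofReal (ψ (z, t) ^ 2 / t ^ 3)) t := by
      intro t
      by_cases ht : 0 < t
      · rw [Set.indicator_of_mem (mem_Ioi.2 ht), hQ]
        simp only [ht, if_true]
      · rw [Set.indicator_of_notMem (fun hc => ht (mem_Ioi.1 hc)), hQ]
        simp only [ht, if_false]
    have hPz : ∀ t : ℝ, P (z, t) = (Ioi (0:ℝ)).indicator
        (fun t => ENNReal.ofReal (pr2 ψ (z, t) ^ 2 / t)) t := by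
      intro t
      by_cases ht : 0 < t
      · rw [Set.indicator_of_mem (mem_Ioi.2 ht), hP]
        simp only [ht, if_true]
      · rw [Set.indicator_of_notMem (fun hc => ht (mem_Ioi.1 hc)), hP]
        simp only [ht, if_false]
    calc ∫⁻ t, Q (z, t)
        = ∫⁻ t in Ioi (0:ℝ), ENNReal.ofReal (ψ (z, t) ^ 2 / t ^ 3) := by
          rw [lintegral_congr hQz, lintegral_indicator measurableSet_Ioi]
      _ ≤ ∫⁻ t in Ioi (0:ℝ), ENNReal.ofReal (pr2 ψ (z, t) ^ 2 / t) := by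
          refine hardy_slice _ _ (fun t => hasDerivAt_slice hsm z t)
            ((cont_pr2 hsm).comp (Continuous.prodMk_right z)) ?_
          refine image_eq_zero_of_notMem_tsupport fun hc => ?_
          exact absurd (hsupp hc).1 (lt_irrefl 0)
      _ = ∫⁻ t, P (z, t) := by
          rw [lintegral_congr hPz, lintegral_indicator measurableSet_Ioi]
  calc ∫⁻ x in halfDisk R, ENNReal.ofReal (ψ x ^ 2 / x.2 ^ 3)
      = ∫⁻ x in halfDisk R, Q x := by
        refine setLIntegral_congr_fun (measurableSet_halfDisk R)
          (fun x hx => ?_)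
        rw [hQ]
        simp only [hx.1, if_true]
    _ ≤ ∫⁻ x, Q x := setLIntegral_le_lintegral _ _
    _ ≤ ∫⁻ x, P x := key
    _ = ∫⁻ x in halfDisk R, P x := by
        rw [← lintegral_indicator (measurableSet_halfDisk R)]
        refine lintegral_congr fun x => ?_
        by_cases hx : x ∈ halfDisk R
        · rw [Set.indicator_of_mem hx]
        · rw [Set.indicator_of_notMem hx, hP]
          by_cases h2 : 0 < x.2
          · simp only [h2, if_true]
            have hx' : x ∉ tsupport ψ := fun hc => hx (hsupp hc)
            have : fderiv ℝ ψ x = 0 := by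
              by_contra hne
              exact hx' (support_fderiv_subset ℝ (Function.mem_support.2 hne))
            rw [pr2, this]
            simp
          · simp only [h2, if_false]
    _ = ∫⁻ x in halfDisk R, ENNReal.ofReal (pr2 ψ x ^ 2 / x.2) := by
        refine setLIntegral_congr_fun (measurableSet_halfDisk R)
          (fun x hx => ?_)
        rw [hP]
        simp only [hx.1, if_true]

lemma integrableOn_aux {R : ℝ} (hR : 0 < R) {ψ : ℝ × ℝ → ℝ} (hcs : HasCompactSupport ψ)
    (hsupp : tsupport ψ ⊆ halfDisk R) (f : ℝ × ℝ → ℝ)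
    (hf : ContinuousOn f {x : ℝ × ℝ | 0 < x.2})
    (hz : ∀ x, x ∉ tsupport ψ → f x = 0) : IntegrableOn f (halfDisk R) := by
  have hKU : tsupport ψ ⊆ {x : ℝ × ℝ | 0 < x.2} := fun x hx => (hsupp hx).1
  obtain ⟨C, hC⟩ := IsCompact.exists_bound_of_continuousOn hcs (hf.mono hKU)
  haveI : IsFiniteMeasure (volume.restrict (halfDisk R)) :=
    ⟨by rw [Measure.restrict_apply_univ]; exact volume_halfDisk_lt_top hR⟩
  refine ⟨(hf.mono (fun x hx => hx.1)).aestronglyMeasurable (measurableSet_halfDisk R),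
    HasFiniteIntegral.of_bounded (C := max C 0) ?_⟩
  refine (ae_restrict_iff' (measurableSet_halfDisk R)).2 (Filter.Eventually.of_forall
    fun x _ => ?_)
  by_cases hxK : x ∈ tsupport ψ
  · exact (hC x hxK).trans (le_max_left _ _)
  · rw [hz x hxK, norm_zero]
    exact le_max_right _ _

lemma pointwise_bound {t r gam q : ℝ} (hr : 0 < r) (hgam : 0 < gam) (hq : 1 < q) :
    (max (t - r ^ 2 - gam) 0) ^ (2 * q - 1) * t / r
      ≤ (gam ^ 4)⁻¹ * ((t ^ 2 / r ^ 3) ^ ((1:ℝ)/3) * (|t| ^ (3 * q + 5)) ^ ((2:ℝ)/3)) := by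
  rcases le_or_gt (t - r ^ 2 - gam) 0 with hm | hm
  · rw [max_eq_right hm, Real.zero_rpow (by linarith : 2 * q - 1 ≠ 0), zero_mul, zero_div]
    have h1 : (0:ℝ) ≤ (t ^ 2 / r ^ 3) ^ ((1:ℝ)/3) :=
      Real.rpow_nonneg (by positivity) _
    have h2 : (0:ℝ) ≤ (|t| ^ (3 * q + 5)) ^ ((2:ℝ)/3) :=
      Real.rpow_nonneg (Real.rpow_nonneg (abs_nonneg _) _) _
    positivity
  · have ht : 0 < t := by nlinarith
    have habs : |t| = t := abs_of_pos ht
    have hgt : gam ≤ t := by nlinarith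
    -- simplify the RHS
    have hA : (t ^ 2 / r ^ 3) ^ ((1:ℝ)/3) = t ^ ((2:ℝ)/3) / r := by
      rw [Real.div_rpow (by positivity) (by positivity),
        ← Real.rpow_natCast t 2, ← Real.rpow_natCast r 3,
        ← Real.rpow_mul ht.le, ← Real.rpow_mul hr.le]
      norm_num
    have hB : (|t| ^ (3 * q + 5)) ^ ((2:ℝ)/3) = t ^ (2 * q + 10/3) := by
      rw [habs, ← Real.rpow_mul ht.le]
      ring_nf
    rw [hA, hB]
    have hcollect : t ^ ((2:ℝ)/3) / r * t ^ (2 * q + 10/3) = t ^ (2 * q + 4) / r := by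
      rw [div_mul_eq_mul_div, ← Real.rpow_add ht]
      ring_nf
    rw [hcollect]
    -- the LHS is at most t^(2q)/r
    have hstep1 : (max (t - r ^ 2 - gam) 0) ^ (2 * q - 1) * t / r ≤ t ^ (2 * q) / r := by
      have hmax : max (t - r ^ 2 - gam) 0 = t - r ^ 2 - gam := max_eq_left hm.le
      have h1 : (t - r ^ 2 - gam) ^ (2 * q - 1) ≤ t ^ (2 * q - 1) :=
        Real.rpow_le_rpow hm.le (by nlinarith) (by linarith)
      have h2 : t ^ (2 * q - 1) * t = t ^ (2 * q) := by
        nth_rewrite 2 [← Real.rpow_one t]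
        rw [← Real.rpow_add ht]
        ring_nf
      rw [hmax, ← h2]
      gcongr
    refine hstep1.trans ?_
    have hkey : gam ^ 4 * t ^ (2 * q) ≤ t ^ (2 * q + 4) := by
      rw [Real.rpow_add ht, show ((4:ℝ)) = ((4:ℕ):ℝ) from by norm_num, Real.rpow_natCast,
        mul_comm (t ^ (2*q))]
      exact mul_le_mul_of_nonneg_right (pow_le_pow_left₀ hgam.le hgt 4)
        (Real.rpow_nonneg ht.le _)
    rw [← mul_div_assoc]
    gcongr
    rw [le_inv_mul_iff₀ (by positivity : (0:ℝ) < gam ^ 4)]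
    exact hkey

lemma opnorm_sq_le {ψ : ℝ × ℝ → ℝ} (x : ℝ × ℝ) :
    ‖fderiv ℝ ψ x‖ ^ 2 ≤ 2 * gradsq ψ x := by
  set L := fderiv ℝ ψ x with hL
  have hb : ‖L‖ ≤ |L (1, 0)| + |L (0, 1)| := by
    refine L.opNorm_le_bound (by positivity) fun v => ?_
    have hv : v = v.1 • ((1:ℝ), (0:ℝ)) + v.2 • ((0:ℝ), (1:ℝ)) := by
      ext <;> simp
    calc ‖L v‖ = ‖v.1 • L (1, 0) + v.2 • L (0, 1)‖ := by
          nth_rewrite 1 [hv]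
          rw [map_add, L.map_smul, L.map_smul]
      _ ≤ ‖v.1 • L (1, 0)‖ + ‖v.2 • L (0, 1)‖ := norm_add_le _ _
      _ = |v.1| * |L (1, 0)| + |v.2| * |L (0, 1)| := by
          rw [norm_smul, norm_smul]
          rfl
      _ ≤ ‖v‖ * |L (1, 0)| + ‖v‖ * |L (0, 1)| := by
          gcongr
          · exact norm_fst_le v
          · exact norm_snd_le v
      _ = (|L (1, 0)| + |L (0, 1)|) * ‖v‖ := by ring
  have h2 : ‖L‖ ^ 2 ≤ (|L (1, 0)| + |L (0, 1)|) ^ 2 := by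
    apply sq_le_sq' _ hb
    nlinarith [norm_nonneg L, abs_nonneg (L (1,0)), abs_nonneg (L (0,1))]
  refine h2.trans ?_
  rw [gradsq, pz2, pr2, ← hL]
  nlinarith [sq_nonneg (|L (1,0)| - |L (0,1)|), sq_abs (L (1,0)), sq_abs (L (0,1))]

lemma fderiv_zero_off {ψ : ℝ × ℝ → ℝ} {x : ℝ × ℝ} (hx : x ∉ tsupport ψ) :
    fderiv ℝ ψ x = 0 := by
  by_contra hne
  exact hx (support_fderiv_subset ℝ (Function.mem_support.2 hne))

set_option maxHeartbeats 2000000 in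
/-- The infimum of the `H`-norm over the Nehari manifold
`N = {ψ ∈ H : ψ ≠ 0, I'[ψ]ψ = 0}` is positive. -/
theorem stmt11 (R q lam gam : ℝ) (hR : 0 < R) (hq : 1 < q) (hlam : 0 < lam)
    (hgam : 0 < gam) :
    ∃ ε > (0 : ℝ), ∀ ψ : ℝ × ℝ → ℝ, Adm (halfDisk R) ψ →
      Hnormsq (halfDisk R) ψ ≠ 0 → IprimeSelf (halfDisk R) q lam gam ψ = 0 →
      ε ≤ Real.sqrt (Hnormsq (halfDisk R) ψ) := by
  classical
  have hπ : (0:ℝ) < π := Real.pi_pos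
  set D : Set (ℝ × ℝ) := halfDisk R with hDdef
  have hD : MeasurableSet D := measurableSet_halfDisk R
  set s : ℝ := 3 * q + 5 with hsdef
  have hs0 : (0:ℝ) < s := by simp only [hsdef]; linarith
  have hs8 : (8:ℝ) < s := by simp only [hsdef]; linarith
  set cb : Set (ℝ × ℝ) := Metric.closedBall 0 R with hcbdef
  have hcbvol : volume cb ≠ ⊤ := (ProperSpace.isCompact_closedBall _ _).measure_lt_top.ne
  set p₀ : ℝ≥0 := Real.toNNReal (2 * s / (s + 2)) with hp₀def
  have hp₀coe : (p₀ : ℝ) = 2 * s / (s + 2) := Real.coe_toNNReal _ (by positivity)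
  set q₀ : ℝ≥0 := Real.toNNReal s with hq₀def
  have hq₀coe : (q₀ : ℝ) = s := Real.coe_toNNReal _ hs0.le
  set Csob : ℝ≥0 := MeasureTheory.eLpNormLESNormFDerivOfLeConst ℝ volume cb p₀ q₀ with hCsob
  set δ : ℝ := 1 / (p₀ : ℝ) - 1 / 2 with hδdef
  have hδpos : 0 < δ := by
    rw [hδdef, hp₀coe, one_div_div, sub_pos, div_lt_div_iff₀ (by norm_num) (by positivity)]
    linarith
  set CC : ℝ≥0∞ := (Csob : ℝ≥0∞) * (volume cb) ^ δ * (ENNReal.ofReal (2*R)) ^ ((1:ℝ)/2)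
    with hCCdef
  have hCCne : CC ≠ ⊤ := by
    rw [hCCdef]
    refine ENNReal.mul_ne_top (ENNReal.mul_ne_top ENNReal.coe_ne_top ?_) ?_
    · exact ENNReal.rpow_ne_top_of_nonneg hδpos.le hcbvol
    · exact ENNReal.rpow_ne_top_of_nonneg (by norm_num) ENNReal.ofReal_ne_top
  set K : ℝ≥0∞ := ENNReal.ofReal (2*π^2*lam) * ENNReal.ofReal ((gam^4)⁻¹)
      * CC ^ ((2:ℝ)/3 * s) * (ENNReal.ofReal (2*π^2)⁻¹) ^ ((1+s)/3) with hKdef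
  have hKne : K ≠ ⊤ := by
    rw [hKdef]
    refine ENNReal.mul_ne_top (ENNReal.mul_ne_top (ENNReal.mul_ne_top
      ENNReal.ofReal_ne_top ENNReal.ofReal_ne_top) ?_) ?_
    · exact ENNReal.rpow_ne_top_of_nonneg (by positivity) hCCne
    · exact ENNReal.rpow_ne_top_of_nonneg (by positivity) ENNReal.ofReal_ne_top
  set e : ℝ := (s - 2) / 3 with hedef
  have hepos : 0 < e := by rw [hedef]; linarith
  set ε₂ : ℝ≥0∞ := min 1 (K⁻¹ ^ (1/e)) with hε₂def
  have hε₂pos : ε₂ ≠ 0 := by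
    rcases eq_or_ne K 0 with hK0 | hK0
    · rw [hε₂def, hK0, ENNReal.inv_zero, ENNReal.top_rpow_of_pos (by positivity)]
      simp
    · have h1 : (0:ℝ≥0∞) < K⁻¹ ^ (1/e) :=
        ENNReal.rpow_pos (ENNReal.inv_pos.2 hKne) (ENNReal.inv_ne_top.2 hK0)
      exact (lt_min one_pos h1).ne'
  have hε₂top : ε₂ ≠ ⊤ := ne_top_of_le_ne_top ENNReal.one_ne_top (min_le_left _ _)
  refine ⟨Real.sqrt ε₂.toReal, Real.sqrt_pos.2 (ENNReal.toReal_pos hε₂pos hε₂top), ?_⟩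
  rintro ψ ⟨hsm, hcs, hsupp⟩ hne hIp
  -- nonnegativity and positivity of the norm
  have hI₀nonneg : (0:ℝ) ≤ ∫ x in D, gradsq ψ x / x.2 := by
    refine setIntegral_nonneg hD fun x hx => ?_
    have h2 : 0 < x.2 := hx.1
    have : (0:ℝ) ≤ gradsq ψ x := by rw [gradsq]; positivity
    positivity
  set I₀ : ℝ := ∫ x in D, gradsq ψ x / x.2 with hI₀def
  have hHval : Hnormsq D ψ = 2 * π ^ 2 * I₀ := rfl
  have hHnn : (0:ℝ) ≤ Hnormsq D ψ := by
    rw [hHval]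
    positivity
  have hH0 : 0 < Hnormsq D ψ := lt_of_le_of_ne hHnn (Ne.symm hne)
  have hI₀pos : 0 < I₀ := by nlinarith [hH0, hπ, sq_nonneg π]
  set a : ℝ≥0∞ := ENNReal.ofReal (Hnormsq D ψ) with hadef
  have ha0 : a ≠ 0 := by
    rw [hadef]
    simpa using hH0
  have hatop : a ≠ ⊤ := ENNReal.ofReal_ne_top
  -- integrability of the gradient integrand
  have hint_grad : IntegrableOn (fun x => gradsq ψ x / x.2) D := by
    refine integrableOn_aux hR hcs hsupp _ (((cont_gradsq hsm).continuousOn).div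
      continuous_snd.continuousOn fun x hx => ne_of_gt hx) fun x hx => ?_
    rw [gradsq, pz2, pr2, fderiv_zero_off hx]
    simp
  have hgradnn : 0 ≤ᵐ[volume.restrict D] fun x => gradsq ψ x / x.2 := by
    refine (ae_restrict_iff' hD).2 (Filter.Eventually.of_forall fun x hx => ?_)
    have h2 : 0 < x.2 := hx.1
    have : (0:ℝ) ≤ gradsq ψ x := by rw [gradsq]; positivity
    positivity
  have hIeq : ∫⁻ x in D, ENNReal.ofReal (gradsq ψ x / x.2) = ENNReal.ofReal I₀ :=
    (MeasureTheory.ofReal_integral_eq_lintegral_ofReal hint_grad hgradnn).symm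
  -- the nonlinear term
  set Gf : (ℝ × ℝ) → ℝ := fun x => (max (ψ x - x.2 ^ 2 - gam) 0) ^ (2 * q - 1) * ψ x / x.2
    with hGfdef
  have hGzero : ∀ x, x ∉ tsupport ψ → Gf x = 0 := by
    intro x hx
    rw [hGfdef]
    simp only [image_eq_zero_of_notMem_tsupport hx, mul_zero, zero_div]
  have hGcont : ContinuousOn Gf {x : ℝ × ℝ | 0 < x.2} := by
    have hm : Continuous fun x : ℝ × ℝ => max (ψ x - x.2 ^ 2 - gam) 0 :=
      ((hsm.continuous.sub (continuous_snd.pow 2)).sub continuous_const).max continuous_const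
    have hrp : Continuous fun x : ℝ × ℝ => (max (ψ x - x.2 ^ 2 - gam) 0) ^ (2 * q - 1) :=
      hm.rpow_const fun x => Or.inr (by linarith)
    exact ((hrp.mul hsm.continuous).continuousOn).div continuous_snd.continuousOn
      fun x hx => ne_of_gt hx
  have hint_G : IntegrableOn Gf D := integrableOn_aux hR hcs hsupp _ hGcont hGzero
  have hGnonneg : ∀ x ∈ D, 0 ≤ Gf x := by
    intro x hx
    have h2 : 0 < x.2 := hx.1
    show (0:ℝ) ≤ (max (ψ x - x.2 ^ 2 - gam) 0) ^ (2 * q - 1) * ψ x / x.2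
    rcases le_or_gt (ψ x - x.2 ^ 2 - gam) 0 with hm | hm
    · rw [max_eq_right hm, Real.zero_rpow (by linarith : 2 * q - 1 ≠ 0), zero_mul, zero_div]
    · have hψ : 0 < ψ x := by nlinarith [sq_nonneg x.2]
      exact div_nonneg (mul_nonneg (Real.rpow_nonneg (le_max_right _ _) _) hψ.le) h2.le
  set 𝒢 : ℝ≥0∞ := ∫⁻ x in D, ENNReal.ofReal (Gf x) with h𝒢def
  set T : ℝ≥0∞ := ∫⁻ x in D, ENNReal.ofReal (ψ x ^ 2 / x.2 ^ 3) with hTdef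
  set S : ℝ≥0∞ := ∫⁻ x in D, ENNReal.ofReal (|ψ x| ^ s) with hSdef
  -- Nehari identity
  have hNehari : a = ENNReal.ofReal (2 * π ^ 2 * lam) * 𝒢 := by
    have h1 : Hnormsq D ψ = 2 * π ^ 2 * lam * ∫ x in D, Gf x := by
      rw [IprimeSelf] at hIp
      rw [hGfdef]
      linarith
    rw [hadef, h1, ENNReal.ofReal_mul (by positivity), h𝒢def,
      MeasureTheory.ofReal_integral_eq_lintegral_ofReal hint_G
        ((ae_restrict_iff' hD).2 (Filter.Eventually.of_forall hGnonneg))]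
  -- Hölder step
  have hHolder : 𝒢 ≤ ENNReal.ofReal ((gam ^ 4)⁻¹) * (T ^ ((1:ℝ)/3) * S ^ ((2:ℝ)/3)) := by
    set fA : (ℝ × ℝ) → ℝ≥0∞ := fun x => (ENNReal.ofReal (ψ x ^ 2 / x.2 ^ 3)) ^ ((1:ℝ)/3)
      with hfAdef
    set fB : (ℝ × ℝ) → ℝ≥0∞ := fun x => (ENNReal.ofReal (|ψ x| ^ s)) ^ ((2:ℝ)/3) with hfBdef
    have hmA : Measurable fA := ((((hsm.continuous.pow 2).measurable).div
      ((continuous_snd.pow 3).measurable)).ennreal_ofReal).pow_const _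
    have hmB : Measurable fB := (((hsm.continuous.abs.rpow_const
      fun x => Or.inr hs0.le).measurable).ennreal_ofReal).pow_const _
    have hpoint : ∀ x ∈ D, ENNReal.ofReal (Gf x)
        ≤ ENNReal.ofReal ((gam ^ 4)⁻¹) * (fA x * fB x) := by
      intro x hx
      have h2 : 0 < x.2 := hx.1
      have hreal := pointwise_bound (t := ψ x) (r := x.2) h2 hgam hq
      refine le_trans (ENNReal.ofReal_le_ofReal hreal) ?_
      rw [ENNReal.ofReal_mul (by positivity),
        ENNReal.ofReal_mul (Real.rpow_nonneg (by positivity) _)]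
      refine mul_le_mul_right (mul_le_mul' ?_ ?_) _
      · exact le_of_eq (ENNReal.ofReal_rpow_of_nonneg (by positivity)
          (by norm_num : (0:ℝ) ≤ 1/3)).symm
      · exact le_of_eq (ENNReal.ofReal_rpow_of_nonneg (Real.rpow_nonneg (abs_nonneg _) _)
          (by norm_num : (0:ℝ) ≤ 2/3)).symm
    have hpq : Real.HolderConjugate 3 (3/2) := ⟨by norm_num, by norm_num, by norm_num⟩
    have hcs3 := ENNReal.lintegral_mul_le_Lp_mul_Lq (volume.restrict D) hpq
      hmA.aemeasurable hmB.aemeasurable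
    simp only [Pi.mul_apply] at hcs3
    calc 𝒢 ≤ ∫⁻ x in D, ENNReal.ofReal ((gam ^ 4)⁻¹) * (fA x * fB x) :=
          setLIntegral_mono (measurable_const.mul (hmA.mul hmB)) hpoint
      _ = ENNReal.ofReal ((gam ^ 4)⁻¹) * ∫⁻ x in D, fA x * fB x :=
          lintegral_const_mul' _ _ ENNReal.ofReal_ne_top
      _ ≤ ENNReal.ofReal ((gam ^ 4)⁻¹) *
          ((∫⁻ x in D, fA x ^ (3:ℝ)) ^ (1/(3:ℝ)) * (∫⁻ x in D, fB x ^ (3/2:ℝ)) ^ (1/(3/2:ℝ))) :=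
          mul_le_mul_right hcs3 _
      _ = ENNReal.ofReal ((gam ^ 4)⁻¹) * (T ^ ((1:ℝ)/3) * S ^ ((2:ℝ)/3)) := by
          have e1 : ∀ x : ℝ × ℝ, fA x ^ (3:ℝ) = ENNReal.ofReal (ψ x ^ 2 / x.2 ^ 3) := by
            intro x
            rw [hfAdef, ← ENNReal.rpow_mul]
            norm_num
          have e2 : ∀ x : ℝ × ℝ, fB x ^ (3/2:ℝ) = ENNReal.ofReal (|ψ x| ^ s) := by
            intro x
            rw [hfBdef, ← ENNReal.rpow_mul]
            norm_num
          rw [lintegral_congr e1, lintegral_congr e2]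
          norm_num
          rfl
  -- Hardy step
  have hHardy : T ≤ ENNReal.ofReal I₀ := by
    calc T ≤ ∫⁻ x in D, ENNReal.ofReal (pr2 ψ x ^ 2 / x.2) := hardy2d ψ hsm hsupp
      _ ≤ ∫⁻ x in D, ENNReal.ofReal (gradsq ψ x / x.2) := by
          refine setLIntegral_mono (((cont_gradsq hsm).measurable.div
            continuous_snd.measurable).ennreal_ofReal) fun x hx => ?_
          refine ENNReal.ofReal_le_ofReal ?_
          have h2 : 0 < x.2 := hx.1
          rw [gradsq, div_eq_mul_inv, div_eq_mul_inv]
          exact mul_le_mul_of_nonneg_right (le_add_of_nonneg_left (sq_nonneg _))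
            (inv_nonneg.2 h2.le)
      _ = ENNReal.ofReal I₀ := hIeq
  -- Sobolev step
  have hSobolev : S ≤ CC ^ s * (ENNReal.ofReal I₀) ^ (s/2) := by
    have hsm1 : ContDiff ℝ 1 ψ := hsm.of_le (by exact_mod_cast le_top)
    have hDcb : D ⊆ cb := halfDisk_subset_closedBall hR
    have hsupt_cb : tsupport ψ ⊆ cb := hsupp.trans hDcb
    have hsupp_u : Function.support ψ ⊆ cb := (subset_tsupport ψ).trans hsupt_cb
    have hsupp_fd : Function.support (fderiv ℝ ψ) ⊆ D := (support_fderiv_subset ℝ).trans hsupp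
    have hsupp_fd_cb : Function.support (fderiv ℝ ψ) ⊆ cb := hsupp_fd.trans hDcb
    have hfinrank : Module.finrank ℝ (ℝ × ℝ) = 2 := by
      simp [Module.finrank_prod]
    have hp1 : 1 ≤ p₀ := by
      rw [← NNReal.coe_le_coe, hp₀coe, NNReal.coe_one, le_div_iff₀ (by positivity)]
      linarith
    have hp2 : p₀ < (Module.finrank ℝ (ℝ × ℝ) : ℝ≥0) := by
      rw [hfinrank, ← NNReal.coe_lt_coe, hp₀coe]
      push_cast
      rw [div_lt_iff₀ (by positivity)]
      linarith
    have hpq' : (p₀:ℝ)⁻¹ - ((Module.finrank ℝ (ℝ × ℝ) : ℝ))⁻¹ ≤ ((q₀:ℝ))⁻¹ := by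
      rw [hfinrank, hp₀coe, hq₀coe]
      push_cast
      refine le_of_eq ?_
      field_simp
      ring
    have hsob := MeasureTheory.eLpNorm_le_eLpNorm_fderiv_of_le volume hsm1 hsupp_u hp1 hp2
      hpq' Metric.isBounded_closedBall
    have hq₀ne : ((q₀ : ℝ≥0∞)) ≠ 0 := by
      simp only [ne_eq, ENNReal.coe_eq_zero]
      intro hc
      rw [hc] at hq₀coe
      simp at hq₀coe
      linarith
    have hq₀top : ((q₀ : ℝ≥0∞)) ≠ ⊤ := ENNReal.coe_ne_top
    have hS_le : S ≤ (eLpNorm ψ (q₀ : ℝ≥0∞) volume) ^ s := by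
      have h1 : ∀ x ∈ D, ENNReal.ofReal (|ψ x| ^ s) = (‖ψ x‖₊ : ℝ≥0∞) ^ s := fun x _ => by
        rw [← enorm_eq_nnnorm, Real.enorm_eq_ofReal_abs, ENNReal.ofReal_rpow_of_nonneg (abs_nonneg _) hs0.le]
      calc S = ∫⁻ x in D, (‖ψ x‖₊ : ℝ≥0∞) ^ s := by
            rw [hSdef]
            exact setLIntegral_congr_fun hD h1
        _ ≤ ∫⁻ x, (‖ψ x‖₊ : ℝ≥0∞) ^ s := setLIntegral_le_lintegral _ _
        _ = (eLpNorm ψ (q₀ : ℝ≥0∞) volume) ^ s := by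
            rw [eLpNorm_eq_lintegral_rpow_enorm_toReal hq₀ne hq₀top, ENNReal.coe_toReal, hq₀coe,
              ← ENNReal.rpow_mul, one_div, inv_mul_cancel₀ hs0.ne', ENNReal.rpow_one]
            rfl
    have hp₀le2 : ((p₀ : ℝ≥0∞)) ≤ 2 := by
      have : (p₀ : ℝ) ≤ 2 := by
        rw [hp₀coe, div_le_iff₀ (by positivity)]
        linarith
      exact_mod_cast this
    have hL2 : eLpNorm (fderiv ℝ ψ) 2 (volume.restrict D)
        ≤ (ENNReal.ofReal (2*R) * ENNReal.ofReal I₀) ^ ((1:ℝ)/2) := by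
      rw [eLpNorm_eq_lintegral_rpow_enorm_toReal two_ne_zero ENNReal.ofNat_ne_top]
      simp only [ENNReal.toReal_ofNat]
      refine ENNReal.rpow_le_rpow ?_ (by norm_num)
      calc ∫⁻ x in D, (‖fderiv ℝ ψ x‖₊ : ℝ≥0∞) ^ (2:ℝ)
          ≤ ∫⁻ x in D, ENNReal.ofReal (2 * R * (gradsq ψ x / x.2)) := by
            refine setLIntegral_mono ((measurable_const.mul ((cont_gradsq hsm).measurable.div
              continuous_snd.measurable)).ennreal_ofReal) fun x hx => ?_
            have h2 : 0 < x.2 := hx.1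
            have hxR : x.2 ≤ R := by nlinarith [hx.2, sq_nonneg x.1]
            have hgnn : (0:ℝ) ≤ gradsq ψ x := by rw [gradsq]; positivity
            have heq : (‖fderiv ℝ ψ x‖₊ : ℝ≥0∞) ^ (2:ℝ)
                = ENNReal.ofReal (‖fderiv ℝ ψ x‖ ^ 2) := by
              rw [show (‖fderiv ℝ ψ x‖₊ : ℝ≥0∞) = ENNReal.ofReal ‖fderiv ℝ ψ x‖ from
                  (ENNReal.ofReal_eq_coe_nnreal _).symm,
                ENNReal.ofReal_rpow_of_nonneg (norm_nonneg _) (by norm_num : (0:ℝ) ≤ 2),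
                show ((2:ℝ)) = ((2:ℕ):ℝ) from by norm_num, Real.rpow_natCast]
            rw [heq]
            refine ENNReal.ofReal_le_ofReal ?_
            refine (opnorm_sq_le x).trans ?_
            have hrec : gradsq ψ x = (gradsq ψ x / x.2) * x.2 :=
              (div_mul_cancel₀ _ h2.ne').symm
            have hdnn : 0 ≤ gradsq ψ x / x.2 := div_nonneg hgnn h2.le
            nlinarith
        _ = ENNReal.ofReal (2*R) * ENNReal.ofReal I₀ := by
            rw [← hIeq, ← lintegral_const_mul' _ _ ENNReal.ofReal_ne_top]
            refine setLIntegral_congr_fun hD (fun x hx => ?_)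
            rw [ENNReal.ofReal_mul (by positivity)]
    have hrestr1 : eLpNorm (fderiv ℝ ψ) (p₀ : ℝ≥0∞) volume
        = eLpNorm (fderiv ℝ ψ) (p₀ : ℝ≥0∞) (volume.restrict cb) :=
      (eLpNorm_restrict_eq_of_support_subset (ε := (ℝ × ℝ →L[ℝ] ℝ)) hsupp_fd_cb).symm
    have hrestr2 : eLpNorm (fderiv ℝ ψ) 2 (volume.restrict cb)
        = eLpNorm (fderiv ℝ ψ) 2 (volume.restrict D) := by
      rw [eLpNorm_restrict_eq_of_support_subset (ε := (ℝ × ℝ →L[ℝ] ℝ)) hsupp_fd_cb,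
        eLpNorm_restrict_eq_of_support_subset (ε := (ℝ × ℝ →L[ℝ] ℝ)) hsupp_fd]
    have hmeas_fd : AEStronglyMeasurable (fderiv ℝ ψ) (volume.restrict cb) :=
      (hsm.continuous_fderiv (by simp)).aestronglyMeasurable.restrict
    have hfdLp : eLpNorm (fderiv ℝ ψ) (p₀ : ℝ≥0∞) volume
        ≤ (volume cb) ^ δ * (ENNReal.ofReal (2*R) * ENNReal.ofReal I₀) ^ ((1:ℝ)/2) := by
      rw [hrestr1]
      refine le_trans (eLpNorm_le_eLpNorm_mul_rpow_measure_univ hp₀le2 hmeas_fd) ?_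
      rw [Measure.restrict_apply_univ, hrestr2]
      have hexp : 1 / ((p₀:ℝ≥0∞)).toReal - 1 / ((2:ℝ≥0∞)).toReal = δ := by
        rw [ENNReal.coe_toReal, ENNReal.toReal_ofNat, hδdef]
      rw [hexp, mul_comm]
      exact mul_le_mul_right hL2 _
    calc S ≤ (eLpNorm ψ (q₀ : ℝ≥0∞) volume) ^ s := hS_le
      _ ≤ ((Csob : ℝ≥0∞) * ((volume cb) ^ δ
            * (ENNReal.ofReal (2*R) * ENNReal.ofReal I₀) ^ ((1:ℝ)/2))) ^ s := by
          refine ENNReal.rpow_le_rpow (hsob.trans ?_) hs0.le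
          exact mul_le_mul_right hfdLp _
      _ = CC ^ s * (ENNReal.ofReal I₀) ^ (s/2) := by
          rw [hCCdef]
          rw [ENNReal.mul_rpow_of_nonneg _ _ (by norm_num : (0:ℝ) ≤ 1/2)]
          rw [show (Csob : ℝ≥0∞) * ((volume cb) ^ δ * (ENNReal.ofReal (2*R) ^ ((1:ℝ)/2)
              * ENNReal.ofReal I₀ ^ ((1:ℝ)/2)))
            = ((Csob : ℝ≥0∞) * (volume cb) ^ δ * ENNReal.ofReal (2*R) ^ ((1:ℝ)/2))
              * ENNReal.ofReal I₀ ^ ((1:ℝ)/2) from by ring]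
          rw [ENNReal.mul_rpow_of_nonneg _ _ hs0.le, ← ENNReal.rpow_mul]
          congr 2
          ring
  -- final arithmetic
  have hI₀a : ENNReal.ofReal I₀ = a * ENNReal.ofReal ((2*π^2)⁻¹) := by
    rw [hadef, ← ENNReal.ofReal_mul hHnn]
    congr 1
    rw [hHval]
    field_simp
  have hXne : ENNReal.ofReal I₀ ≠ 0 := by simpa using hI₀pos
  have hXtop : ENNReal.ofReal I₀ ≠ ⊤ := ENNReal.ofReal_ne_top
  have hchain : a ≤ K * (a ^ e * a) := by
    calc a = ENNReal.ofReal (2 * π ^ 2 * lam) * 𝒢 := hNehari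
      _ ≤ ENNReal.ofReal (2 * π ^ 2 * lam) * (ENNReal.ofReal ((gam ^ 4)⁻¹)
            * (T ^ ((1:ℝ)/3) * S ^ ((2:ℝ)/3))) := mul_le_mul_right hHolder _
      _ ≤ ENNReal.ofReal (2 * π ^ 2 * lam) * (ENNReal.ofReal ((gam ^ 4)⁻¹)
            * ((ENNReal.ofReal I₀) ^ ((1:ℝ)/3)
              * (CC ^ s * (ENNReal.ofReal I₀) ^ (s/2)) ^ ((2:ℝ)/3))) := by
          refine mul_le_mul_right (mul_le_mul_right (mul_le_mul' ?_ ?_) _) _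
          · exact ENNReal.rpow_le_rpow hHardy (by norm_num)
          · exact ENNReal.rpow_le_rpow hSobolev (by norm_num)
      _ = ENNReal.ofReal (2 * π ^ 2 * lam) * ENNReal.ofReal ((gam ^ 4)⁻¹) * CC ^ ((2:ℝ)/3 * s)
            * (ENNReal.ofReal I₀) ^ ((1+s)/3) := by
          rw [ENNReal.mul_rpow_of_nonneg _ _ (by norm_num : (0:ℝ) ≤ 2/3),
            ← ENNReal.rpow_mul, ← ENNReal.rpow_mul]
          rw [show s * ((2:ℝ)/3) = (2:ℝ)/3 * s from by ring,
            show s/2 * ((2:ℝ)/3) = s/3 from by ring]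
          rw [show (ENNReal.ofReal I₀) ^ ((1:ℝ)/3) * (CC ^ ((2:ℝ)/3*s)
              * (ENNReal.ofReal I₀) ^ (s/3))
            = CC ^ ((2:ℝ)/3*s) * ((ENNReal.ofReal I₀) ^ ((1:ℝ)/3)
              * (ENNReal.ofReal I₀) ^ (s/3)) from by ring]
          rw [← ENNReal.rpow_add _ _ hXne hXtop]
          rw [show (1:ℝ)/3 + s/3 = (1+s)/3 from by ring]
          ring
      _ = K * (a ^ ((1+s)/3)) := by
          rw [hI₀a, ENNReal.mul_rpow_of_nonneg _ _ (by positivity : (0:ℝ) ≤ (1+s)/3), hKdef]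
          ring
      _ = K * (a ^ e * a) := by
          rw [show (1+s)/3 = e + 1 from by rw [hedef]; ring,
            ENNReal.rpow_add _ _ ha0 hatop, ENNReal.rpow_one]
  have h1K : 1 ≤ K * a ^ e := by
    have h' : 1 * a ≤ (K * a ^ e) * a := by
      rw [one_mul, mul_assoc]
      exact hchain
    exact (ENNReal.mul_le_mul_iff_left ha0 hatop).1 h'
  have haK : K⁻¹ ≤ a ^ e := by
    rcases eq_or_ne K 0 with h0 | h0
    · rw [h0, zero_mul] at h1K
      simp at h1K
    · calc K⁻¹ = K⁻¹ * 1 := (mul_one _).symm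
        _ ≤ K⁻¹ * (K * a ^ e) := mul_le_mul_right h1K _
        _ = a ^ e := by rw [← mul_assoc, ENNReal.inv_mul_cancel h0 hKne, one_mul]
  have ha_ge : ε₂ ≤ a := by
    have h2 : K⁻¹ ^ (1/e) ≤ (a ^ e) ^ (1/e) := ENNReal.rpow_le_rpow haK (by positivity)
    rw [← ENNReal.rpow_mul, mul_one_div, div_self hepos.ne', ENNReal.rpow_one] at h2
    exact le_trans (min_le_right _ _) h2
  refine Real.sqrt_le_sqrt ?_
  calc ε₂.toReal ≤ a.toReal := ENNReal.toReal_mono hatop ha_ge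
    _ = Hnormsq D ψ := ENNReal.toReal_ofReal hHnn


end
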